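/- Let p be a prime with ν_p(N) = 1 and suppose the p-part of χ is trivial. If f is a weight 1 newform of level N and character χ, then |a_p| = √p; but since any nonzero a_p of a weight 1 newform at a ramified prime is a root of unity (hence has absolute value 1 or 0), no such newform exists: S₁^new(N, χ) = 0. -/

import Mathlib

/-- Let p be a prime with ν_p(N) = 1 and χ_p trivial.  Given (Li) every weight 1
newform f of level N and character χ has |a_p(f)| = √p, and (Deligne–Serre) a_p(f)
is 0 or a root of unity, the space of such newforms is empty: S₁^new(N,χ) = 0. -/
theorem no_weight_one_newforms_steinberg (p N : ℕ) (hp : p.Prime) (hpN : N.factorization p = 1)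
    (χ : DirichletCharacter ℂ N) (hχp : ¬ p ∣ χ.conductor)
    (F : Type*) -- the set of weight 1 newforms of level N and character χ
    (ap : F → ℂ) -- the p-th Fourier coefficient
    (hLi : ∀ f : F, ‖ap f‖ = Real.sqrt p)
    (hDS : ∀ f : F, ap f = 0 ∨ ∃ n, 0 < n ∧ (ap f) ^ n = 1) :
    IsEmpty F := by
  constructor
  intro f
  have h1 : ‖ap f‖ = Real.sqrt p := hLi f
  have hp2 : (2 : ℝ) ≤ p := by exact_mod_cast hp.two_le
  have hs : (1 : ℝ) < Real.sqrt p := by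
    have : Real.sqrt 1 < Real.sqrt p := by
      apply Real.sqrt_lt_sqrt (by norm_num) (by linarith)
    simpa using this
  rcases hDS f with h | ⟨n, hn, hpow⟩
  · rw [h] at h1
    simp at h1
    linarith [Real.sqrt_nonneg (p : ℝ), hs]
  · have habs : ‖ap f‖ ^ n = 1 := by
      rw [← norm_pow, hpow, norm_one]
    have hgt : (1:ℝ) < ‖ap f‖ := by rw [h1]; exact hs
    have : (1:ℝ) < ‖ap f‖ ^ n := one_lt_pow₀ hgt hn.ne'
    linarith [habs ▸ this]
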